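/- arXiv:2412.20587 — 2 statements merged into one kernel-verified Lean document; each statement's English description precedes it below -/
import Mathlib

section
/- Demazure operators satisfy the braid relation: for |i − j| = 1 on ℂ[x_1,…,x_n], ∂_i ∂_j ∂_i = ∂_j ∂_i ∂_j, and for |i − j| > 1 they commute: ∂_i ∂_j = ∂_j ∂_i. -/
open MvPolynomial

private lemma Xne {n : ℕ} {i j : Fin n} (h : i ≠ j) :
    (X i - X j : MvPolynomial (Fin n) ℂ) ≠ 0 :=
  sub_ne_zero_of_ne (fun e => h (MvPolynomial.X_injective e))

private lemma rr {n : ℕ} (σ τ : Equiv.Perm (Fin n)) (g : MvPolynomial (Fin n) ℂ) :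
    rename ⇑σ (rename ⇑τ g) = rename ⇑(σ * τ) g := by
  rw [rename_rename, Equiv.Perm.coe_mul]

private lemma comm_aux {n : ℕ} (i j i' j' : Fin n) (hij : i ≠ j) (hij' : i' ≠ j')
    (h1 : i ≠ i') (h2 : i ≠ j') (h3 : j ≠ i') (h4 : j ≠ j')
    (Dk Dl : MvPolynomial (Fin n) ℂ → MvPolynomial (Fin n) ℂ)
    (hDk : ∀ f, (X i - X j) * Dk f = f - rename (Equiv.swap i j) f)
    (hDl : ∀ f, (X i' - X j') * Dl f = f - rename (Equiv.swap i' j') f)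
    (f : MvPolynomial (Fin n) ℂ) : Dk (Dl f) = Dl (Dk f) := by
  have sX : rename (Equiv.swap i j) (X i' - X j' : MvPolynomial (Fin n) ℂ) = X i' - X j' := by
    rw [map_sub, rename_X, rename_X, Equiv.swap_apply_of_ne_of_ne h1.symm h3.symm,
      Equiv.swap_apply_of_ne_of_ne h2.symm h4.symm]
  have tX : rename (Equiv.swap i' j') (X i - X j : MvPolynomial (Fin n) ℂ) = X i - X j := by
    rw [map_sub, rename_X, rename_X, Equiv.swap_apply_of_ne_of_ne h1 h2,
      Equiv.swap_apply_of_ne_of_ne h3 h4]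
  have hperm : Equiv.swap i j * Equiv.swap i' j' = Equiv.swap i' j' * Equiv.swap i j := by
    ext x
    simp only [Equiv.Perm.mul_apply, Equiv.swap_apply_def]
    split_ifs <;> simp_all
  have hcomm : rename (Equiv.swap i j) (rename (Equiv.swap i' j') f)
      = rename (Equiv.swap i' j') (rename (Equiv.swap i j) f) := by
    rw [rr, rr, hperm]
  have L : (X i' - X j') * ((X i - X j) * Dk (Dl f))
      = f - rename (Equiv.swap i' j') f - rename (Equiv.swap i j) f
        + rename (Equiv.swap i j) (rename (Equiv.swap i' j') f) := by
    have e1 : (X i' - X j') * rename (Equiv.swap i j) (Dl f)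
        = rename (Equiv.swap i j) f
          - rename (Equiv.swap i j) (rename (Equiv.swap i' j') f) := by
      rw [← map_sub, ← hDl, map_mul, sX]
    rw [hDk, mul_sub, hDl, e1]
    ring
  have R : (X i - X j) * ((X i' - X j') * Dl (Dk f))
      = f - rename (Equiv.swap i j) f - rename (Equiv.swap i' j') f
        + rename (Equiv.swap i' j') (rename (Equiv.swap i j) f) := by
    have e1 : (X i - X j) * rename (Equiv.swap i' j') (Dk f)
        = rename (Equiv.swap i' j') f
          - rename (Equiv.swap i' j') (rename (Equiv.swap i j) f) := by
      rw [← map_sub, ← hDk, map_mul, tX]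
    rw [hDl, mul_sub, hDk, e1]
    ring
  have hne : (X i' - X j') * (X i - X j) ≠ (0 : MvPolynomial (Fin n) ℂ) :=
    mul_ne_zero (Xne hij') (Xne hij)
  apply mul_left_cancel₀ hne
  linear_combination L - R + hcomm

private lemma braid_aux {n : ℕ} (i j m : Fin n) (hij : i ≠ j) (hjm : j ≠ m) (him : i ≠ m)
    (Dk Dl : MvPolynomial (Fin n) ℂ → MvPolynomial (Fin n) ℂ)
    (hDk : ∀ f, (X i - X j) * Dk f = f - rename (Equiv.swap i j) f)
    (hDl : ∀ f, (X j - X m) * Dl f = f - rename (Equiv.swap j m) f)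
    (f : MvPolynomial (Fin n) ℂ) : Dk (Dl (Dk f)) = Dl (Dk (Dl f)) := by
  have ss : ∀ g : MvPolynomial (Fin n) ℂ,
      rename (Equiv.swap i j) (rename (Equiv.swap i j) g) = g := by
    intro g
    rw [rr, Equiv.swap_mul_self, Equiv.Perm.coe_one, rename_id, AlgHom.id_apply]
  have tt : ∀ g : MvPolynomial (Fin n) ℂ,
      rename (Equiv.swap j m) (rename (Equiv.swap j m) g) = g := by
    intro g
    rw [rr, Equiv.swap_mul_self, Equiv.Perm.coe_one, rename_id, AlgHom.id_apply]
  -- braid relation for the swaps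
  have b1 : Equiv.swap i j * Equiv.swap j m * Equiv.swap i j = Equiv.swap i m := by
    have h := Equiv.swap_mul_swap_mul_swap (x := m) (y := j) (z := i) hjm.symm him.symm
    rwa [Equiv.swap_comm j i, Equiv.swap_comm m j] at h
  have b2 : Equiv.swap j m * Equiv.swap i j * Equiv.swap j m = Equiv.swap i m := by
    have h := Equiv.swap_mul_swap_mul_swap (x := i) (y := j) (z := m) hij him
    rwa [Equiv.swap_comm m i] at h
  have hbr : rename (Equiv.swap i j) (rename (Equiv.swap j m) (rename (Equiv.swap i j) f))
      = rename (Equiv.swap j m) (rename (Equiv.swap i j) (rename (Equiv.swap j m) f)) := by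
    rw [rr, rr, rr, rr, b1, b2]
  have ta : rename (Equiv.swap j m) (X i - X j : MvPolynomial (Fin n) ℂ) = X i - X m := by
    rw [map_sub, rename_X, rename_X, Equiv.swap_apply_of_ne_of_ne hij him,
      Equiv.swap_apply_left]
  have sb : rename (Equiv.swap i j) (X j - X m : MvPolynomial (Fin n) ℂ) = X i - X m := by
    rw [map_sub, rename_X, rename_X, Equiv.swap_apply_right,
      Equiv.swap_apply_of_ne_of_ne him.symm hjm.symm]
  -- left chain
  have h1 := hDk f
  have h1t : (X i - X m) * rename (Equiv.swap j m) (Dk f)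
      = rename (Equiv.swap j m) f
        - rename (Equiv.swap j m) (rename (Equiv.swap i j) f) := by
    have h := congrArg (rename (Equiv.swap j m)) h1
    rwa [map_mul, ta, map_sub] at h
  have h2 := hDl (Dk f)
  have E2 : ((X i - X j) * (X i - X m) * (X j - X m)) * Dl (Dk f)
      = (X i - X m) * (f - rename (Equiv.swap i j) f)
        - (X i - X j) * (rename (Equiv.swap j m) f
            - rename (Equiv.swap j m) (rename (Equiv.swap i j) f)) := by
    linear_combination ((X (R := ℂ) i - X j) * (X i - X m)) * h2
      + (X (R := ℂ) i - X m) * h1 - (X (R := ℂ) i - X j) * h1t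
  have E2s := congrArg (rename (Equiv.swap i j)) E2
  simp only [map_mul, map_sub, rename_X, Equiv.swap_apply_left, Equiv.swap_apply_right,
    Equiv.swap_apply_of_ne_of_ne him.symm hjm.symm, ss] at E2s
  have h3 := hDk (Dl (Dk f))
  have P1 : (X i - X j) * (((X i - X j) * (X i - X m) * (X j - X m)) * Dk (Dl (Dk f)))
      = (X i - X j) * (f - rename (Equiv.swap i j) f - rename (Equiv.swap j m) f
          + rename (Equiv.swap i j) (rename (Equiv.swap j m) f)
          + rename (Equiv.swap j m) (rename (Equiv.swap i j) f)
          - rename (Equiv.swap i j) (rename (Equiv.swap j m) (rename (Equiv.swap i j) f))) := by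
    linear_combination ((X (R := ℂ) i - X j) * (X i - X m) * (X j - X m)) * h3 + E2 + E2s
  have Q1 := mul_left_cancel₀ (Xne hij) P1
  -- right chain
  have h1' := hDl f
  have h1s : (X i - X m) * rename (Equiv.swap i j) (Dl f)
      = rename (Equiv.swap i j) f
        - rename (Equiv.swap i j) (rename (Equiv.swap j m) f) := by
    have h := congrArg (rename (Equiv.swap i j)) h1'
    rwa [map_mul, sb, map_sub] at h
  have h2' := hDk (Dl f)
  have E2' : ((X i - X j) * (X i - X m) * (X j - X m)) * Dk (Dl f)
      = (X i - X m) * (f - rename (Equiv.swap j m) f)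
        - (X j - X m) * (rename (Equiv.swap i j) f
            - rename (Equiv.swap i j) (rename (Equiv.swap j m) f)) := by
    linear_combination ((X (R := ℂ) j - X m) * (X i - X m)) * h2'
      + (X (R := ℂ) i - X m) * h1' - (X (R := ℂ) j - X m) * h1s
  have E2t := congrArg (rename (Equiv.swap j m)) E2'
  simp only [map_mul, map_sub, rename_X, Equiv.swap_apply_left, Equiv.swap_apply_right,
    Equiv.swap_apply_of_ne_of_ne hij him, tt] at E2t
  have h3' := hDl (Dk (Dl f))
  have P2 : (X j - X m) * (((X i - X j) * (X i - X m) * (X j - X m)) * Dl (Dk (Dl f)))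
      = (X j - X m) * (f - rename (Equiv.swap j m) f - rename (Equiv.swap i j) f
          + rename (Equiv.swap j m) (rename (Equiv.swap i j) f)
          + rename (Equiv.swap i j) (rename (Equiv.swap j m) f)
          - rename (Equiv.swap j m) (rename (Equiv.swap i j) (rename (Equiv.swap j m) f))) := by
    linear_combination ((X (R := ℂ) i - X j) * (X i - X m) * (X j - X m)) * h3' + E2' + E2t
  have Q2 := mul_left_cancel₀ (Xne hjm) P2
  have hne : (X i - X j) * (X i - X m) * (X j - X m) ≠ (0 : MvPolynomial (Fin n) ℂ) :=
    mul_ne_zero (mul_ne_zero (Xne hij) (Xne him)) (Xne hjm)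
  apply mul_left_cancel₀ hne
  linear_combination Q1 - Q2 - hbr

/-- Demazure operators `∂_k` on `ℂ[x_1,…,x_n]` (each characterized by
`(x_k - x_{k+1}) * ∂_k f = f - s_k f`) satisfy the braid relation
`∂_k ∂_l ∂_k = ∂_l ∂_k ∂_l` when `|k - l| = 1`, and commute, `∂_k ∂_l = ∂_l ∂_k`,
when `|k - l| > 1`. -/
theorem stmt_6 (n : ℕ) (k l : ℕ) (hk : k + 1 < n) (hl : l + 1 < n)
    (Dk Dl : MvPolynomial (Fin n) ℂ → MvPolynomial (Fin n) ℂ)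
    (hDk : ∀ f, (X (⟨k, Nat.lt_of_succ_lt hk⟩ : Fin n) - X ⟨k + 1, hk⟩) * Dk f =
      f - rename (Equiv.swap (⟨k, Nat.lt_of_succ_lt hk⟩ : Fin n) ⟨k + 1, hk⟩) f)
    (hDl : ∀ f, (X (⟨l, Nat.lt_of_succ_lt hl⟩ : Fin n) - X ⟨l + 1, hl⟩) * Dl f =
      f - rename (Equiv.swap (⟨l, Nat.lt_of_succ_lt hl⟩ : Fin n) ⟨l + 1, hl⟩) f) :
    ((l = k + 1 ∨ k = l + 1) →
      ∀ f, Dk (Dl (Dk f)) = Dl (Dk (Dl f))) ∧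
    ((k + 1 < l ∨ l + 1 < k) →
      ∀ f, Dk (Dl f) = Dl (Dk f)) := by
  constructor
  · rintro (rfl | rfl) f
    · exact braid_aux ⟨k, Nat.lt_of_succ_lt hk⟩ ⟨k + 1, hk⟩ ⟨k + 1 + 1, hl⟩
        (by simp [Fin.ext_iff]) (by simp [Fin.ext_iff]) (by simp [Fin.ext_iff]; omega)
        Dk Dl hDk hDl f
    · exact (braid_aux ⟨l, Nat.lt_of_succ_lt hl⟩ ⟨l + 1, hl⟩ ⟨l + 1 + 1, hk⟩
        (by simp [Fin.ext_iff]) (by simp [Fin.ext_iff]) (by simp [Fin.ext_iff]; omega)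
        Dl Dk hDl hDk f).symm
  · rintro (h | h) f <;>
    exact comm_aux ⟨k, Nat.lt_of_succ_lt hk⟩ ⟨k + 1, hk⟩ ⟨l, Nat.lt_of_succ_lt hl⟩ ⟨l + 1, hl⟩
      (by simp [Fin.ext_iff]) (by simp [Fin.ext_iff])
      (by simp [Fin.ext_iff]; omega) (by simp [Fin.ext_iff]; omega)
      (by simp [Fin.ext_iff]; omega) (by simp [Fin.ext_iff]; omega)
      Dk Dl hDk hDl f
end

section
/- Let B_i = R ⊗_{R^{s_i}} R (with R = ℂ[x_1,…,x_n]) be the elementary Bott–Samelson bimodule with structure maps m(f_1 ⊗ f_2 ⊗ g_1 ⊗ g_2) = f_1 · ∂_i(f_2 g_1) ⊗ g_2 (from B_i ⊗_R B_i → B_i), Δ(f ⊗ g) = f ⊗ 1 ⊗ 1 ⊗ g, η(f ⊗ g) = f·g, and ε(f) = (1/2)(α_i ⊗ 1 + 1 ⊗ α_i)·f. Then (B_i, m, Δ, ε, η) is a Frobenius object in the category of R-bimodules: m is associative with unit ε, Δ is coassociative with counit η, and the Frobenius condition (id ⊗ m)∘(Δ ⊗ id) = Δ∘m = (m ⊗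 id)∘(id ⊗ Δ) holds. -/
open MvPolynomial TensorProduct

noncomputable section

/-- `R = ℂ[x_1,…,x_n]`. -/
abbrev PolyR (n : ℕ) := MvPolynomial (Fin n) ℂ

/-- The subalgebra of `s_i`-invariant polynomials in `ℂ[x_1,…,x_n]`. -/
def invariantSub (n : ℕ) (i j : Fin n) : Subalgebra ℂ (PolyR n) :=
  AlgHom.equalizer (rename (Equiv.swap i j)) (AlgHom.id ℂ (PolyR n))

/-- `B_i = R ⊗_{R^{s_i}} R` as a `ℂ`-vector space. -/
abbrev BS (n : ℕ) (i j : Fin n) := PolyR n ⊗[invariantSub n i j] PolyR n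

/-- `B_i ⊗_R B_i ≅ R ⊗_{R^{s_i}} R ⊗_{R^{s_i}} R`. -/
abbrev BS2 (n : ℕ) (i j : Fin n) := PolyR n ⊗[invariantSub n i j] BS n i j

/-- `B_i ⊗_R B_i ⊗_R B_i ≅ R ⊗_{R^{s_i}} R ⊗_{R^{s_i}} R ⊗_{R^{s_i}} R`. -/
abbrev BS3 (n : ℕ) (i j : Fin n) := PolyR n ⊗[invariantSub n i j] BS2 n i j


lemma aux_move {n : ℕ} {i j : Fin n} {M : Type} [AddCommGroup M]
    [Module (invariantSub n i j) M] (x c : PolyR n) (hc : c ∈ invariantSub n i j) (b : M) :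
    (x * c) ⊗ₜ[invariantSub n i j] b
      = x ⊗ₜ[invariantSub n i j] ((⟨c, hc⟩ : invariantSub n i j) • b) := by
  have h1 : (⟨c, hc⟩ : invariantSub n i j) • x = x * c := by
    rw [Algebra.smul_def, mul_comm]; rfl
  have h3 : x ⊗ₜ[invariantSub n i j] ((⟨c, hc⟩ : invariantSub n i j) • b) =
      (⟨c, hc⟩ : invariantSub n i j) • (x ⊗ₜ[invariantSub n i j] b) :=
    (TensorProduct.mk _ _ _ x).map_smul _ b
  rw [← h1, h3]; exact (smul_tmul' _ _ _).symm

lemma aux_smul_poly {n : ℕ} {i j : Fin n} (c : PolyR n) (hc : c ∈ invariantSub n i j)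
    (y : PolyR n) : (⟨c, hc⟩ : invariantSub n i j) • y = c * y := by
  rw [Algebra.smul_def]; rfl

lemma aux_smul_bs {n : ℕ} {i j : Fin n} (c : PolyR n) (hc : c ∈ invariantSub n i j)
    (y z : PolyR n) :
    (⟨c, hc⟩ : invariantSub n i j) • (y ⊗ₜ[invariantSub n i j] z)
      = (c * y) ⊗ₜ[invariantSub n i j] z := by
  rw [← aux_smul_poly c hc y]; exact smul_tmul' _ _ _

lemma aux_ss {n : ℕ} (i j : Fin n) (f : PolyR n) :
    rename (Equiv.swap i j) (rename (Equiv.swap i j) f) = f := by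
  rw [rename_rename]
  rw [show (⇑(Equiv.swap i j) ∘ ⇑(Equiv.swap i j)) = id from by
    rw [← Equiv.symm_swap]; exact Equiv.self_comp_symm _]
  exact congrArg (fun φ => φ f) (rename_id (R := ℂ) (σ := Fin n))

set_option maxHeartbeats 4000000 in
set_option synthInstance.maxHeartbeats 2000000 in
/-- The Bott–Samelson bimodule `B_i` with multiplication
`m(f₁ ⊗ f₂ ⊗ g₁ ⊗ g₂) = f₁·∂_i(f₂g₁) ⊗ g₂`, comultiplication `Δ(f ⊗ g) = f ⊗ 1 ⊗ 1 ⊗ g`,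
counit (of the comonoid) `η(f ⊗ g) = fg` and unit (of the monoid)
`ε(f) = (1/2)(α_i ⊗ 1 + 1 ⊗ α_i)·f` is a Frobenius object in `R`-bimodules:
`m` is associative with unit `ε`, `Δ` is coassociative with counit `η`, and the
Frobenius condition `(id ⊗ m)∘(Δ ⊗ id) = Δ∘m = (m ⊗ id)∘(id ⊗ Δ)` holds.  All maps are
written on the identifications of iterated `⊗_R`-powers of `B_i` with iterated tensor
products of `R` over `R^{s_i}` and are determined by additivity and their values on pure
tensors, which are hypothesized; `D = ∂_i` is the Demazure operator, characterized by
`(x_i - x_{i+1}) * D f = f - s_i f`. -/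
theorem stmt_7 (n : ℕ) (i j : Fin n) (hij : (i : ℕ) + 1 = (j : ℕ))
    (D : PolyR n → PolyR n)
    (hD : ∀ f, (X i - X j) * D f = f - rename (Equiv.swap i j) f)
    -- the multiplication `m : B_i ⊗_R B_i → B_i` and its variants `m ⊗ id`, `id ⊗ m`
    (m2 : BS2 n i j → BS n i j)
    (hm2_add : ∀ a b, m2 (a + b) = m2 a + m2 b)
    (hm2 : ∀ x h y : PolyR n, m2 (x ⊗ₜ (h ⊗ₜ y)) = (x * D h) ⊗ₜ y)
    (mL : BS3 n i j → BS2 n i j)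
    (hmL_add : ∀ a b, mL (a + b) = mL a + mL b)
    (hmL : ∀ x h y z : PolyR n, mL (x ⊗ₜ (h ⊗ₜ (y ⊗ₜ z))) = (x * D h) ⊗ₜ (y ⊗ₜ z))
    (mR : BS3 n i j → BS2 n i j)
    (hmR_add : ∀ a b, mR (a + b) = mR a + mR b)
    (hmR : ∀ x y h z : PolyR n, mR (x ⊗ₜ (y ⊗ₜ (h ⊗ₜ z))) = x ⊗ₜ ((y * D h) ⊗ₜ z))
    -- the comultiplication `Δ : B_i → B_i ⊗_R B_i` and its variants `Δ ⊗ id`, `id ⊗ Δ`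
    (Δ2 : BS n i j → BS2 n i j)
    (hΔ2_add : ∀ a b, Δ2 (a + b) = Δ2 a + Δ2 b)
    (hΔ2 : ∀ f g : PolyR n, Δ2 (f ⊗ₜ g) = f ⊗ₜ ((1 : PolyR n) ⊗ₜ g))
    (ΔL : BS2 n i j → BS3 n i j)
    (hΔL_add : ∀ a b, ΔL (a + b) = ΔL a + ΔL b)
    (hΔL : ∀ x h y : PolyR n, ΔL (x ⊗ₜ (h ⊗ₜ y)) = x ⊗ₜ ((1 : PolyR n) ⊗ₜ (h ⊗ₜ y)))
    (ΔR : BS2 n i j → BS3 n i j)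
    (hΔR_add : ∀ a b, ΔR (a + b) = ΔR a + ΔR b)
    (hΔR : ∀ x h y : PolyR n, ΔR (x ⊗ₜ (h ⊗ₜ y)) = x ⊗ₜ (h ⊗ₜ ((1 : PolyR n) ⊗ₜ y)))
    -- the unit `ε : R → B_i`, tensored on the left/right with `id_{B_i}`
    (εL : BS n i j → BS2 n i j)
    (hεL_add : ∀ a b, εL (a + b) = εL a + εL b)
    (hεL : ∀ f g : PolyR n, εL (f ⊗ₜ g) =
      (MvPolynomial.C (1/2 : ℂ) * (X i - X j)) ⊗ₜ (f ⊗ₜ g) +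
        MvPolynomial.C (1/2 : ℂ) ⊗ₜ (((X i - X j) * f) ⊗ₜ g))
    (εR : BS n i j → BS2 n i j)
    (hεR_add : ∀ a b, εR (a + b) = εR a + εR b)
    (hεR : ∀ f g : PolyR n, εR (f ⊗ₜ g) =
      f ⊗ₜ ((g * (X i - X j) * MvPolynomial.C (1/2 : ℂ)) ⊗ₜ (1 : PolyR n)) +
        f ⊗ₜ ((g * MvPolynomial.C (1/2 : ℂ)) ⊗ₜ (X i - X j)))
    -- the counit `η : B_i → R`, tensored on the left/right with `id_{B_i}`
    (ηL : BS2 n i j → BS n i j)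
    (hηL_add : ∀ a b, ηL (a + b) = ηL a + ηL b)
    (hηL : ∀ x h y : PolyR n, ηL (x ⊗ₜ (h ⊗ₜ y)) = (x * h) ⊗ₜ y)
    (ηR : BS2 n i j → BS n i j)
    (hηR_add : ∀ a b, ηR (a + b) = ηR a + ηR b)
    (hηR : ∀ x h y : PolyR n, ηR (x ⊗ₜ (h ⊗ₜ y)) = x ⊗ₜ (h * y)) :
    -- associativity of `m`
    (∀ w : BS3 n i j, m2 (mL w) = m2 (mR w)) ∧
    -- unit laws for `ε`
    (∀ v : BS n i j, m2 (εL v) = v) ∧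
    (∀ v : BS n i j, m2 (εR v) = v) ∧
    -- coassociativity of `Δ`
    (∀ v : BS n i j, ΔL (Δ2 v) = ΔR (Δ2 v)) ∧
    -- counit laws for `η`
    (∀ v : BS n i j, ηL (Δ2 v) = v) ∧
    (∀ v : BS n i j, ηR (Δ2 v) = v) ∧
    -- the Frobenius condition
    (∀ w : BS2 n i j, mR (ΔL w) = Δ2 (m2 w) ∧ mL (ΔR w) = Δ2 (m2 w)) := by

  -- basic facts
  have hij' : i ≠ j := by intro h; subst h; omega
  have hα : (X i - X j : PolyR n) ≠ 0 := by
    intro h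
    have := congrArg (eval (fun k => if k = i then (1:ℂ) else 0)) h
    simp [hij'.symm] at this
  have hss := aux_ss i j
  have hsα : rename (Equiv.swap i j) (X i - X j : PolyR n) = -(X i - X j) := by
    rw [map_sub, rename_X, rename_X, Equiv.swap_apply_left, Equiv.swap_apply_right]; ring
  have hDs : ∀ f, rename (Equiv.swap i j) (D f) = D f := by
    intro f
    apply mul_left_cancel₀ hα
    have h1 := congrArg (rename (Equiv.swap i j)) (hD f)
    rw [map_mul, hsα, map_sub, hss] at h1
    have h2 := hD f
    linear_combination -h1 - h2
  have hDmem : ∀ f, D f ∈ invariantSub n i j := fun f => hDs f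
  have h2 : (C (1/2 : ℂ) : PolyR n) + C (1/2 : ℂ) = 1 := by
    rw [← map_add]; norm_num
  have hDC : ∀ f c : PolyR n, rename (Equiv.swap i j) c = c → D (f * c) = D f * c := by
    intro f c hc
    apply mul_left_cancel₀ hα
    rw [hD, map_mul, hc]
    linear_combination (-c) * hD f
  have hDαmul : ∀ f : PolyR n, D ((X i - X j) * f) = f + rename (Equiv.swap i j) f := by
    intro f; apply mul_left_cancel₀ hα
    rw [hD, map_mul, hsα]; ring
  have hDgac : ∀ g : PolyR n, D (g * (X i - X j) * C (1/2:ℂ)) =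
      C (1/2:ℂ) * (g + rename (Equiv.swap i j) g) := by
    intro g; apply mul_left_cancel₀ hα
    rw [hD, map_mul, map_mul, hsα, rename_C]; ring
  -- zero values
  have hm2_0 : m2 0 = 0 := by
    have h := hm2_add 0 0; rw [add_zero] at h; exact (left_eq_add.mp h)
  have hmL_0 : mL 0 = 0 := by
    have h := hmL_add 0 0; rw [add_zero] at h; exact (left_eq_add.mp h)
  have hmR_0 : mR 0 = 0 := by
    have h := hmR_add 0 0; rw [add_zero] at h; exact (left_eq_add.mp h)
  have hΔ2_0 : Δ2 0 = 0 := by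
    have h := hΔ2_add 0 0; rw [add_zero] at h; exact (left_eq_add.mp h)
  have hΔL_0 : ΔL 0 = 0 := by
    have h := hΔL_add 0 0; rw [add_zero] at h; exact (left_eq_add.mp h)
  have hΔR_0 : ΔR 0 = 0 := by
    have h := hΔR_add 0 0; rw [add_zero] at h; exact (left_eq_add.mp h)
  have hεL_0 : εL 0 = 0 := by
    have h := hεL_add 0 0; rw [add_zero] at h; exact (left_eq_add.mp h)
  have hεR_0 : εR 0 = 0 := by
    have h := hεR_add 0 0; rw [add_zero] at h; exact (left_eq_add.mp h)
  have hηL_0 : ηL 0 = 0 := by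
    have h := hηL_add 0 0; rw [add_zero] at h; exact (left_eq_add.mp h)
  have hηR_0 : ηR 0 = 0 := by
    have h := hηR_add 0 0; rw [add_zero] at h; exact (left_eq_add.mp h)
  refine ⟨?_, ?_, ?_, ?_, ?_, ?_, ?_⟩
  · -- associativity
    intro w
    induction w using TensorProduct.induction_on with
    | zero => rw [hmL_0, hmR_0, hm2_0]
    | tmul x b =>
      induction b using TensorProduct.induction_on with
      | zero => rw [tmul_zero, hmL_0, hmR_0, hm2_0]
      | tmul h c =>
        induction c using TensorProduct.induction_on with
        | zero => rw [tmul_zero, tmul_zero, hmL_0, hmR_0, hm2_0]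
        | tmul y z =>
          rw [hmL, hmR, hm2, hm2, hDC h (D y) (hDs y), mul_assoc]
        | add c1 c2 ih1 ih2 =>
          rw [tmul_add, tmul_add, hmL_add, hmR_add, hm2_add, hm2_add, ih1, ih2]
      | add b1 b2 ih1 ih2 =>
        rw [tmul_add, hmL_add, hmR_add, hm2_add, hm2_add, ih1, ih2]
    | add w1 w2 ih1 ih2 => rw [hmL_add, hmR_add, hm2_add, hm2_add, ih1, ih2]
  · -- left unit
    intro v
    induction v using TensorProduct.induction_on with
    | zero => rw [hεL_0, hm2_0]
    | tmul f g =>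
      rw [hεL, hm2_add, hm2, hm2, hDαmul, ← add_tmul]
      congr 1
      linear_combination (C (1/2:ℂ) : PolyR n) * hD f + f * h2
    | add a b iha ihb => rw [hεL_add, hm2_add, iha, ihb]
  · -- right unit
    intro v
    induction v using TensorProduct.induction_on with
    | zero => rw [hεR_0, hm2_0]
    | tmul f g =>
      have hc1 : (C (1/2:ℂ) * (g + rename (Equiv.swap i j) g) : PolyR n)
          ∈ invariantSub n i j := by
        have : rename (Equiv.swap i j)
            ((C (1/2:ℂ) * (g + rename (Equiv.swap i j) g)) : PolyR n)
            = C (1/2:ℂ) * (g + rename (Equiv.swap i j) g) := by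
          rw [map_mul, rename_C, map_add, hss]; ring
        exact this
      have hc2 : (D g * C (1/2:ℂ) : PolyR n) ∈ invariantSub n i j := by
        have : rename (Equiv.swap i j) ((D g * C (1/2:ℂ)) : PolyR n)
            = D g * C (1/2:ℂ) := by rw [map_mul, hDs, rename_C]
        exact this
      rw [hεR, hm2_add, hm2, hm2, hDgac, hDC g _ (rename_C _ _),
        aux_move f _ hc1 (1 : PolyR n), aux_move f _ hc2 (X i - X j),
        aux_smul_poly, aux_smul_poly, ← tmul_add]
      congr 1
      linear_combination (C (1/2:ℂ) : PolyR n) * hD g + g * h2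
    | add a b iha ihb => rw [hεR_add, hm2_add, iha, ihb]
  · -- coassociativity
    intro v
    induction v using TensorProduct.induction_on with
    | zero => rw [hΔ2_0, hΔL_0, hΔR_0]
    | tmul f g => rw [hΔ2, hΔL, hΔR]
    | add a b iha ihb => rw [hΔ2_add, hΔL_add, hΔR_add, iha, ihb]
  · -- left counit
    intro v
    induction v using TensorProduct.induction_on with
    | zero => rw [hΔ2_0, hηL_0]
    | tmul f g => rw [hΔ2, hηL, mul_one]
    | add a b iha ihb => rw [hΔ2_add, hηL_add, iha, ihb]
  · -- right counit
    intro v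
    induction v using TensorProduct.induction_on with
    | zero => rw [hΔ2_0, hηR_0]
    | tmul f g => rw [hΔ2, hηR, one_mul]
    | add a b iha ihb => rw [hΔ2_add, hηR_add, iha, ihb]
  · -- Frobenius
    intro w
    constructor
    · induction w using TensorProduct.induction_on with
      | zero => rw [hΔL_0, hmR_0, hm2_0, hΔ2_0]
      | tmul x b =>
        induction b using TensorProduct.induction_on with
        | zero => rw [tmul_zero, hΔL_0, hmR_0, hm2_0, hΔ2_0]
        | tmul h y =>
          rw [hΔL, hmR, hm2, hΔ2, one_mul,
            aux_move x (D h) (hDmem h) ((1 : PolyR n) ⊗ₜ[invariantSub n i j] y),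
            aux_smul_bs, mul_one]
        | add c1 c2 ih1 ih2 =>
          rw [tmul_add, hΔL_add, hmR_add, hm2_add, hΔ2_add, ih1, ih2]
      | add w1 w2 ih1 ih2 => rw [hΔL_add, hmR_add, hm2_add, hΔ2_add, ih1, ih2]
    · induction w using TensorProduct.induction_on with
      | zero => rw [hΔR_0, hmL_0, hm2_0, hΔ2_0]
      | tmul x b =>
        induction b using TensorProduct.induction_on with
        | zero => rw [tmul_zero, hΔR_0, hmL_0, hm2_0, hΔ2_0]
        | tmul h y => rw [hΔR, hmL, hm2, hΔ2]
        | add c1 c2 ih1 ih2 =>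
          rw [tmul_add, hΔR_add, hmL_add, hm2_add, hΔ2_add, ih1, ih2]
      | add w1 w2 ih1 ih2 => rw [hΔR_add, hmL_add, hm2_add, hΔ2_add, ih1, ih2]
end
end
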